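/- arXiv:1204.3947 — 3 statements merged into one kernel-verified Lean document; each statement's English description precedes it below -/
import Mathlib

section
/- Let C be the Lorentz cone in ℝ^{n+1}, i.e., C = {x : x₀ ≥ 0 and x₀² ≥ x₁² + ⋯ + x_n²}, and let a be a point in the interior of C. Then ∂C ∩ ∂(a − C) is contained in the affine hyperplane {x : ā · x = (ā · a)/2}, where ā = (−a₀, a₁, …, a_n). -/
lemma lorentz_frontier (n : ℕ) (x : EuclideanSpace ℝ (Fin (n + 1)))
    (hx : x ∈ frontier {x : EuclideanSpace ℝ (Fin (n + 1)) |
      0 ≤ x 0 ∧ ∑ i : Fin n, (x i.succ) ^ 2 ≤ (x 0) ^ 2}) :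
    ∑ i : Fin n, (x i.succ) ^ 2 = (x 0) ^ 2 := by
  set C : Set (EuclideanSpace ℝ (Fin (n + 1))) :=
    {x | 0 ≤ x 0 ∧ ∑ i : Fin n, (x i.succ) ^ 2 ≤ (x 0) ^ 2} with hCdef
  have cont0 : Continuous fun y : EuclideanSpace ℝ (Fin (n + 1)) => y 0 :=
    (EuclideanSpace.proj (0 : Fin (n + 1))).continuous
  have contS : Continuous fun y : EuclideanSpace ℝ (Fin (n + 1)) =>
      ∑ i : Fin n, (y i.succ) ^ 2 :=
    continuous_finset_sum _ fun i _ =>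
      ((EuclideanSpace.proj (i.succ : Fin (n + 1))).continuous).pow 2
  have hclosed : IsClosed C := by
    have : C = {x : EuclideanSpace ℝ (Fin (n + 1)) | 0 ≤ x 0} ∩
        {x | ∑ i : Fin n, (x i.succ) ^ 2 ≤ (x 0) ^ 2} := rfl
    rw [this]
    exact (isClosed_le continuous_const cont0).inter (isClosed_le contS (cont0.pow 2))
  rw [hclosed.frontier_eq] at hx
  obtain ⟨⟨h0, hle⟩, hni⟩ := hx
  by_contra hne
  have hlt : ∑ i : Fin n, (x i.succ) ^ 2 < (x 0) ^ 2 := lt_of_le_of_ne hle hne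
  have hpos : 0 < x 0 := by
    rcases lt_or_eq_of_le h0 with h | h
    · exact h
    · exfalso
      have : (0:ℝ) ≤ ∑ i : Fin n, (x i.succ) ^ 2 :=
        Finset.sum_nonneg fun i _ => sq_nonneg _
      nlinarith
  apply hni
  have hopen : IsOpen {y : EuclideanSpace ℝ (Fin (n + 1)) |
      0 < y 0 ∧ ∑ i : Fin n, (y i.succ) ^ 2 < (y 0) ^ 2} := by
    have : {y : EuclideanSpace ℝ (Fin (n + 1)) |
        0 < y 0 ∧ ∑ i : Fin n, (y i.succ) ^ 2 < (y 0) ^ 2} =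
        {y : EuclideanSpace ℝ (Fin (n + 1)) | 0 < y 0} ∩
        {y | ∑ i : Fin n, (y i.succ) ^ 2 < (y 0) ^ 2} := rfl
    rw [this]
    exact (isOpen_lt continuous_const cont0).inter (isOpen_lt contS (cont0.pow 2))
  have hsub : {y : EuclideanSpace ℝ (Fin (n + 1)) |
      0 < y 0 ∧ ∑ i : Fin n, (y i.succ) ^ 2 < (y 0) ^ 2} ⊆ C := by
    intro y hy
    exact ⟨le_of_lt hy.1, le_of_lt hy.2⟩
  exact interior_maximal hsub hopen ⟨hpos, hlt⟩

/-- For the Lorentz cone `C` in `ℝ^{n+1}` and `a` interior to `C`,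
`∂C ∩ ∂(a - C)` lies in the hyperplane `{x | ⟪ā, x⟫ = ⟪ā, a⟫ / 2}` where
`ā = (-a₀, a₁, …, a_n)`. -/
theorem stmt1 (n : ℕ) (C : Set (EuclideanSpace ℝ (Fin (n + 1))))
    (hC : C = {x | 0 ≤ x 0 ∧ ∑ i : Fin n, (x i.succ) ^ 2 ≤ (x 0) ^ 2})
    (a : EuclideanSpace ℝ (Fin (n + 1))) (ha : a ∈ interior C)
    (abar : EuclideanSpace ℝ (Fin (n + 1)))
    (habar0 : abar 0 = -(a 0)) (habari : ∀ i : Fin n, abar i.succ = a i.succ) :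
    ∀ x ∈ frontier C ∩ frontier ((fun c => a - c) '' C),
      (inner ℝ abar x : ℝ) = (inner ℝ abar a : ℝ) / 2 := by
  rintro x ⟨hx1, hx2⟩
  -- x ∈ frontier C
  have h1 : ∑ i : Fin n, (x i.succ) ^ 2 = (x 0) ^ 2 := lorentz_frontier n x (hC ▸ hx1)
  -- a - x ∈ frontier C
  have himg : (fun c => a - c) '' C = (Homeomorph.subLeft a) '' C := rfl
  have h2' : a - x ∈ frontier C := by
    rw [himg, ← (Homeomorph.subLeft a).image_frontier] at hx2
    obtain ⟨y, hy, hxy⟩ := hx2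
    have : a - x = y := by
      simp only [Homeomorph.subLeft_apply] at hxy
      rw [← hxy]; abel
    rwa [this]
  have h2 : ∑ i : Fin n, ((a - x) i.succ) ^ 2 = ((a - x) 0) ^ 2 :=
    lorentz_frontier n (a - x) (hC ▸ h2')
  have hsub : ∀ i : Fin (n + 1), (a - x) i = a i - x i := fun i => rfl
  simp only [hsub] at h2
  have expand : ∑ i : Fin n, (a i.succ - x i.succ) ^ 2 =
      (∑ i : Fin n, (a i.succ) ^ 2) - 2 * (∑ i : Fin n, a i.succ * x i.succ)
      + ∑ i : Fin n, (x i.succ) ^ 2 := by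
    have h : ∀ i : Fin n, (a i.succ - x i.succ) ^ 2 =
        (a i.succ) ^ 2 - a i.succ * x i.succ * 2 + (x i.succ) ^ 2 := fun i => by ring
    rw [Finset.sum_congr rfl (fun i _ => h i), Finset.sum_add_distrib,
      Finset.sum_sub_distrib, ← Finset.sum_mul]
    ring
  rw [expand] at h2
  have hinner : ∀ y : EuclideanSpace ℝ (Fin (n + 1)),
      (inner ℝ abar y : ℝ) = abar 0 * y 0 + ∑ i : Fin n, abar i.succ * y i.succ := by
    intro y
    rw [PiLp.inner_apply, Fin.sum_univ_succ]
    simp [mul_comm]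
  rw [hinner, hinner]
  simp only [habar0, habari]
  have hSA : ∑ i : Fin n, a i.succ * a i.succ = ∑ i : Fin n, (a i.succ) ^ 2 :=
    Finset.sum_congr rfl fun i _ => (sq (a i.succ)).symm
  rw [hSA]
  linear_combination (-1/2 : ℝ) * h2 + (1/2 : ℝ) * h1
end

section
/- Every 2-dimensional compact convex body K in the plane contains an inscribed parallelogram whose four vertices all lie on the boundary of K. -/
noncomputable section Stmt4Aux

namespace Stmt4Aux

/-- Build a point of the euclidean plane from coordinates. -/
def mk2 (s h : ℝ) : EuclideanSpace ℝ (Fin 2) :=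
  (WithLp.equiv 2 (Fin 2 → ℝ)).symm ![s, h]

@[simp] lemma mk2_apply0 (s h : ℝ) : mk2 s h 0 = s := by simp [mk2]
@[simp] lemma mk2_apply1 (s h : ℝ) : mk2 s h 1 = h := by simp [mk2]

lemma mk2_eta (x : EuclideanSpace ℝ (Fin 2)) : x = mk2 (x 0) (x 1) := by
  ext i; fin_cases i <;> simp [mk2]

lemma mk2_combo (a b s h s' h' : ℝ) :
    a • mk2 s h + b • mk2 s' h' = mk2 (a*s + b*s') (a*h + b*h') := by
  ext i; fin_cases i <;> simp [mk2]

lemma mk2_add (s h s' h' : ℝ) : mk2 s h + mk2 s' h' = mk2 (s + s') (h + h') := by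
  ext i; fin_cases i <;> simp [mk2]

lemma mk2_sub (s h s' h' : ℝ) : mk2 s h - mk2 s' h' = mk2 (s - s') (h - h') := by
  ext i; fin_cases i <;> simp [mk2]

lemma mk2_smul (c s h : ℝ) : c • mk2 s h = mk2 (c*s) (c*h) := by
  ext i; fin_cases i <;> simp [mk2]

lemma dist_mk2 (s h s' h' : ℝ) :
    dist (mk2 s h) (mk2 s' h') = Real.sqrt ((s - s')^2 + (h - h')^2) := by
  rw [EuclideanSpace.dist_eq]
  simp [mk2, Fin.sum_univ_two, Real.dist_eq, sq_abs]

lemma dist_mk2_horiz (s s' h : ℝ) : dist (mk2 s h) (mk2 s' h) = |s - s'| := by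
  rw [dist_mk2]; simp [Real.sqrt_sq_eq_abs]

lemma dist_mk2_vert (s h h' : ℝ) : dist (mk2 s h) (mk2 s h') = |h - h'| := by
  rw [dist_mk2]; simp [Real.sqrt_sq_eq_abs]

lemma continuous_mk2 : Continuous fun p : ℝ × ℝ => mk2 p.1 p.2 := by
  have h1 : Continuous fun p : ℝ × ℝ => (![p.1, p.2] : Fin 2 → ℝ) := by
    apply continuous_pi
    intro i
    fin_cases i
    · exact continuous_fst
    · exact continuous_snd
  exact (PiLp.continuousLinearEquiv 2 ℝ (fun _ : Fin 2 => ℝ)).symm.continuous.comp h1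

lemma continuous_coord (i : Fin 2) : Continuous fun x : EuclideanSpace ℝ (Fin 2) => x i :=
  (continuous_apply i).comp (PiLp.continuousLinearEquiv 2 ℝ (fun _ : Fin 2 => ℝ)).continuous

variable (K : Set (EuclideanSpace ℝ (Fin 2)))

/-- horizontal slice of `K` at height `h` -/
def slice (h : ℝ) : Set ℝ := {s | mk2 s h ∈ K}

/-- the set of heights of points of `K` -/
def J : Set ℝ := (fun x : EuclideanSpace ℝ (Fin 2) => x 1) '' K

def lo : ℝ := sInf (J K)
def hi : ℝ := sSup (J K)
def fl (h : ℝ) : ℝ := sInf (slice K h)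
def gr (h : ℝ) : ℝ := sSup (slice K h)
def wd (h : ℝ) : ℝ := gr K h - fl K h

lemma mem_J_iff (h : ℝ) : h ∈ J K ↔ (slice K h).Nonempty := by
  constructor
  · rintro ⟨x, hx, rfl⟩
    exact ⟨x 0, by simpa [slice] using (mk2_eta x) ▸ hx⟩
  · rintro ⟨s, hs⟩
    exact ⟨mk2 s h, hs, by simp⟩

variable {K}

section Basic

variable (hK : IsCompact K)

include hK

lemma slice_isCompact (h : ℝ) : IsCompact (slice K h) := by
  rw [Metric.isCompact_iff_isClosed_bounded]
  constructor
  · have : Continuous fun s : ℝ => mk2 s h :=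
      continuous_mk2.comp (continuous_id.prodMk continuous_const)
    exact hK.isClosed.preimage this
  · obtain ⟨R, hR⟩ := hK.isBounded.subset_ball 0
    apply (Metric.isBounded_ball (x := (0:ℝ)) (r := R)).subset
    intro s hs
    have h1 : mk2 s h ∈ Metric.ball (0 : EuclideanSpace ℝ (Fin 2)) R := hR hs
    simp only [Metric.mem_ball] at h1 ⊢
    have : |s - 0| ≤ dist (mk2 s h) 0 := by
      rw [show (0 : EuclideanSpace ℝ (Fin 2)) = mk2 0 0 from by ext i; fin_cases i <;> simp [mk2]]
      rw [dist_mk2, ← Real.sqrt_sq_eq_abs]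
      apply Real.sqrt_le_sqrt
      nlinarith [sq_nonneg (h - 0)]
    calc dist s 0 = |s - 0| := by rw [Real.dist_eq]
    _ ≤ dist (mk2 s h) 0 := this
    _ < R := h1

lemma J_isCompact : IsCompact (J K) := hK.image (continuous_coord 1)

variable {h : ℝ} (hh : h ∈ J K)
include hh

lemma fl_mem : fl K h ∈ slice K h :=
  ((slice_isCompact hK h).sInf_mem ((mem_J_iff K h).1 hh))

lemma gr_mem : gr K h ∈ slice K h :=
  ((slice_isCompact hK h).sSup_mem ((mem_J_iff K h).1 hh))

omit hh in
lemma fl_le (s : ℝ) (hs : s ∈ slice K h) : fl K h ≤ s :=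
  csInf_le (slice_isCompact hK h).isBounded.bddBelow hs

omit hh in
lemma le_gr (s : ℝ) (hs : s ∈ slice K h) : s ≤ gr K h :=
  le_csSup (slice_isCompact hK h).isBounded.bddAbove hs

lemma fl_le_gr : fl K h ≤ gr K h := fl_le hK _ (gr_mem hK hh)

lemma wd_nonneg : 0 ≤ wd K h := by
  have := fl_le_gr hK hh; simp [wd]; linarith

end Basic

lemma slice_convex (hconv : Convex ℝ K) {h : ℝ} : Convex ℝ (slice K h) := by
  intro s1 hs1 s2 hs2 a b ha hb hab
  have := hconv hs1 hs2 ha hb hab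
  simp only [slice, Set.mem_setOf_eq] at *
  rwa [mk2_combo, show a * h + b * h = h by rw [← add_mul, hab, one_mul]] at this

lemma Icc_subset_slice (hK : IsCompact K) (hconv : Convex ℝ K) {h : ℝ} (hh : h ∈ J K) :
    Set.Icc (fl K h) (gr K h) ⊆ slice K h :=
  (slice_convex hconv).ordConnected.out (fl_mem hK hh) (gr_mem hK hh)

/-- main convexity transfer for slices -/
lemma combo_mem_slice (hconv : Convex ℝ K) {h1 h2 s1 s2 a b : ℝ}
    (hs1 : s1 ∈ slice K h1) (hs2 : s2 ∈ slice K h2) (ha : 0 ≤ a) (hb : 0 ≤ b) (hab : a + b = 1) :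
    a * s1 + b * s2 ∈ slice K (a * h1 + b * h2) := by
  have := hconv hs1 hs2 ha hb hab
  simpa [slice, mk2_combo] using this

lemma J_convex (hconv : Convex ℝ K) : Convex ℝ (J K) := by
  intro h1 hh1 h2 hh2 a b ha hb hab
  rw [mem_J_iff] at *
  obtain ⟨s1, hs1⟩ := hh1
  obtain ⟨s2, hs2⟩ := hh2
  exact ⟨a * s1 + b * s2, by simpa using combo_mem_slice hconv hs1 hs2 ha hb hab⟩

section Main

variable (hK : IsCompact K) (hconv : Convex ℝ K) (hJne : (J K).Nonempty)

include hK hconv hJne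

lemma J_eq_Icc : J K = Set.Icc (lo K) (hi K) := by
  apply Set.eq_of_subset_of_subset
  · intro h hh
    exact ⟨csInf_le (J_isCompact hK).isBounded.bddBelow hh,
      le_csSup (J_isCompact hK).isBounded.bddAbove hh⟩
  · have h1 : lo K ∈ J K := (J_isCompact hK).sInf_mem hJne
    have h2 : hi K ∈ J K := (J_isCompact hK).sSup_mem hJne
    exact (J_convex hconv).ordConnected.out h1 h2

lemma gr_concave : ConcaveOn ℝ (Set.Icc (lo K) (hi K)) (gr K) := by
  refine ⟨convex_Icc _ _, ?_⟩
  intro h1 hh1 h2 hh2 a b ha hb hab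
  rw [← J_eq_Icc hK hconv hJne] at hh1 hh2
  have hm : a * gr K h1 + b * gr K h2 ∈ slice K (a * h1 + b * h2) :=
    combo_mem_slice hconv (gr_mem hK hh1) (gr_mem hK hh2) ha hb hab
  have hmem : (a * h1 + b * h2) ∈ J K := by
    rw [mem_J_iff]; exact ⟨_, hm⟩
  simpa [smul_eq_mul] using le_gr hK _ hm

lemma fl_convex : ConvexOn ℝ (Set.Icc (lo K) (hi K)) (fl K) := by
  refine ⟨convex_Icc _ _, ?_⟩
  intro h1 hh1 h2 hh2 a b ha hb hab
  rw [← J_eq_Icc hK hconv hJne] at hh1 hh2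
  have hm : a * fl K h1 + b * fl K h2 ∈ slice K (a * h1 + b * h2) :=
    combo_mem_slice hconv (fl_mem hK hh1) (fl_mem hK hh2) ha hb hab
  have hmem : (a * h1 + b * h2) ∈ J K := by
    rw [mem_J_iff]; exact ⟨_, hm⟩
  simpa [smul_eq_mul] using fl_le hK _ hm

lemma wd_concave : ConcaveOn ℝ (Set.Icc (lo K) (hi K)) (wd K) := by
  have := (gr_concave hK hconv hJne).sub (fl_convex hK hconv hJne)
  exact this

lemma wd_continuousOn : ContinuousOn (wd K) (Set.Ioo (lo K) (hi K)) := by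
  have := (wd_concave hK hconv hJne).continuousOn_interior
  rwa [interior_Icc] at this

end Main

/-- Upper semicontinuity of the width function, via compactness. -/
lemma wd_usc (hK : IsCompact K) {h₀ c : ℝ} (hc : wd K h₀ < c) :
    ∃ δ > 0, ∀ h ∈ J K, |h - h₀| < δ → wd K h < c := by
  classical
  set C : Set (EuclideanSpace ℝ (Fin 2) × EuclideanSpace ℝ (Fin 2)) :=
    (K ×ˢ K) ∩ {q | q.1 1 = q.2 1 ∧ c ≤ q.2 0 - q.1 0} with hC
  have hCclosed : IsClosed {q : EuclideanSpace ℝ (Fin 2) × EuclideanSpace ℝ (Fin 2) |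
      q.1 1 = q.2 1 ∧ c ≤ q.2 0 - q.1 0} := by
    apply IsClosed.inter
    · exact isClosed_eq ((continuous_coord 1).comp continuous_fst)
        ((continuous_coord 1).comp continuous_snd)
    · exact isClosed_le continuous_const
        (((continuous_coord 0).comp continuous_snd).sub ((continuous_coord 0).comp continuous_fst))
  have hCcompact : IsCompact C := (hK.prod hK).inter_right hCclosed
  set T : Set ℝ := (fun q : EuclideanSpace ℝ (Fin 2) × EuclideanSpace ℝ (Fin 2) => q.1 1) '' C
    with hT
  have hTclosed : IsClosed T :=
    (hCcompact.image ((continuous_coord 1).comp continuous_fst)).isClosed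
  have h₀T : h₀ ∉ T := by
    rintro ⟨⟨x, y⟩, ⟨⟨hxK, hyK⟩, ⟨heq, hge⟩⟩, rfl⟩
    simp only at heq hge
    have hhx : x 1 ∈ J K := ⟨x, hxK, rfl⟩
    have hx0 : x 0 ∈ slice K (x 1) := by simpa [slice] using (mk2_eta x) ▸ hxK
    have hy0 : y 0 ∈ slice K (x 1) := by
      rw [heq]; simpa [slice] using (mk2_eta y) ▸ hyK
    have h1 := fl_le hK _ hx0
    have h2 := le_gr hK _ hy0
    have : c ≤ wd K (x 1) := by simp only [wd]; linarith
    exact absurd hc (by simpa using not_lt.2 this)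
  obtain ⟨δ, hδpos, hδ⟩ := Metric.isOpen_iff.1 hTclosed.isOpen_compl h₀ h₀T
  refine ⟨δ, hδpos, fun h hh hnear => ?_⟩
  by_contra hcon
  push_neg at hcon
  have hmem : h ∈ T := by
    refine ⟨(mk2 (fl K h) h, mk2 (gr K h) h), ⟨⟨fl_mem hK hh, gr_mem hK hh⟩, ?_⟩, by simp⟩
    constructor
    · simp
    · simp only [mk2_apply0]
      simp only [wd] at hcon
      linarith
  exact hδ (by simpa [Real.dist_eq] using hnear) hmem


section Frontier

variable (hK : IsCompact K)
include hK

lemma gr_frontier {h : ℝ} (hh : h ∈ J K) : mk2 (gr K h) h ∈ frontier K := by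
  rw [hK.isClosed.frontier_eq]
  refine ⟨gr_mem hK hh, fun hmem => ?_⟩
  rw [mem_interior_iff_mem_nhds, Metric.mem_nhds_iff] at hmem
  obtain ⟨ε, hε, hball⟩ := hmem
  have h1 : mk2 (gr K h + ε/2) h ∈ K := by
    apply hball
    rw [Metric.mem_ball, dist_mk2_horiz]
    rw [show gr K h + ε/2 - gr K h = ε/2 by ring, abs_of_pos (by linarith)]
    linarith
  have := le_gr hK _ h1
  linarith

lemma fl_frontier {h : ℝ} (hh : h ∈ J K) : mk2 (fl K h) h ∈ frontier K := by
  rw [hK.isClosed.frontier_eq]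
  refine ⟨fl_mem hK hh, fun hmem => ?_⟩
  rw [mem_interior_iff_mem_nhds, Metric.mem_nhds_iff] at hmem
  obtain ⟨ε, hε, hball⟩ := hmem
  have h1 : mk2 (fl K h - ε/2) h ∈ K := by
    apply hball
    rw [Metric.mem_ball, dist_mk2_horiz]
    rw [show fl K h - ε/2 - fl K h = -(ε/2) by ring, abs_neg, abs_of_pos (by linarith)]
    linarith
  have := fl_le hK _ h1
  linarith

lemma top_frontier {s : ℝ} (hs : s ∈ slice K (hi K)) : mk2 s (hi K) ∈ frontier K := by
  rw [hK.isClosed.frontier_eq]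
  refine ⟨hs, fun hmem => ?_⟩
  rw [mem_interior_iff_mem_nhds, Metric.mem_nhds_iff] at hmem
  obtain ⟨ε, hε, hball⟩ := hmem
  have h1 : mk2 s (hi K + ε/2) ∈ K := by
    apply hball
    rw [Metric.mem_ball, dist_mk2_vert]
    rw [show hi K + ε/2 - hi K = ε/2 by ring, abs_of_pos (by linarith)]
    linarith
  have h2 : hi K + ε/2 ∈ J K := ⟨mk2 s (hi K + ε/2), h1, by simp⟩
  have := le_csSup (J_isCompact hK).isBounded.bddAbove h2
  rw [← hi] at this
  linarith

lemma bot_frontier {s : ℝ} (hs : s ∈ slice K (lo K)) : mk2 s (lo K) ∈ frontier K := by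
  rw [hK.isClosed.frontier_eq]
  refine ⟨hs, fun hmem => ?_⟩
  rw [mem_interior_iff_mem_nhds, Metric.mem_nhds_iff] at hmem
  obtain ⟨ε, hε, hball⟩ := hmem
  have h1 : mk2 s (lo K - ε/2) ∈ K := by
    apply hball
    rw [Metric.mem_ball, dist_mk2_vert]
    rw [show lo K - ε/2 - lo K = -(ε/2) by ring, abs_neg, abs_of_pos (by linarith)]
    linarith
  have h2 : lo K - ε/2 ∈ J K := ⟨mk2 s (lo K - ε/2), h1, by simp⟩
  have := csInf_le (J_isCompact hK).isBounded.bddBelow h2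
  rw [← lo] at this
  linarith

omit hK in
lemma gr_eq_fl_add_wd (h : ℝ) : gr K h = fl K h + wd K h := by simp [wd]

end Frontier

/-- The two basis vectors. -/
lemma span_pair_eq_top {t u v : ℝ} (ht : t ≠ 0) (hv : v ≠ 0) :
    Submodule.span ℝ ({mk2 t 0, mk2 u v} : Set (EuclideanSpace ℝ (Fin 2))) = ⊤ := by
  rw [Submodule.eq_top_iff']
  intro z
  have h0 : mk2 t 0 ∈ Submodule.span ℝ ({mk2 t 0, mk2 u v} : Set (EuclideanSpace ℝ (Fin 2))) :=
    Submodule.subset_span (by simp)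
  have h1 : mk2 u v ∈ Submodule.span ℝ ({mk2 t 0, mk2 u v} : Set (EuclideanSpace ℝ (Fin 2))) :=
    Submodule.subset_span (by simp)
  have he0 : mk2 1 0 ∈ Submodule.span ℝ ({mk2 t 0, mk2 u v} : Set (EuclideanSpace ℝ (Fin 2))) := by
    have := Submodule.smul_mem _ t⁻¹ h0
    rwa [mk2_smul, inv_mul_cancel₀ ht, mul_zero] at this
  have he1 : mk2 0 1 ∈ Submodule.span ℝ ({mk2 t 0, mk2 u v} : Set (EuclideanSpace ℝ (Fin 2))) := by
    have h2 := Submodule.sub_mem _ h1 (Submodule.smul_mem _ u he0)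
    rw [mk2_smul, mul_one, mul_zero, mk2_sub, sub_self, sub_zero] at h2
    have := Submodule.smul_mem _ v⁻¹ h2
    rwa [mk2_smul, mul_zero, inv_mul_cancel₀ hv] at this
  have hz : z = z 0 • mk2 1 0 + z 1 • mk2 0 1 := by
    ext i; fin_cases i <;> simp [mk2]
  rw [hz]
  exact Submodule.add_mem _ (Submodule.smul_mem _ _ he0) (Submodule.smul_mem _ _ he1)

/-- Build the inscribed parallelogram from two equal-length horizontal segments at
different heights whose endpoints are on the frontier. -/
lemma build (K : Set (EuclideanSpace ℝ (Fin 2))) {a b h h' t : ℝ} (ht : 0 < t) (hhh : h ≠ h')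
    (h1 : mk2 a h ∈ frontier K) (h2 : mk2 (a+t) h ∈ frontier K)
    (h3 : mk2 b h' ∈ frontier K) (h4 : mk2 (b+t) h' ∈ frontier K) :
    ∃ x y x' y' : EuclideanSpace ℝ (Fin 2),
      x ∈ frontier K ∧ y ∈ frontier K ∧ x' ∈ frontier K ∧ y' ∈ frontier K ∧
      x + x' = y + y' ∧
      (interior (convexHull ℝ {x, y, x', y'})).Nonempty := by
  refine ⟨mk2 a h, mk2 (a+t) h, mk2 (b+t) h', mk2 b h', h1, h2, h4, h3, ?_, ?_⟩
  · rw [mk2_add, mk2_add]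
    congr 1
    ring
  · set S : Set (EuclideanSpace ℝ (Fin 2)) := {mk2 a h, mk2 (a+t) h, mk2 (b+t) h', mk2 b h'}
      with hS
    rw [(convex_convexHull ℝ S).interior_nonempty_iff_affineSpan_eq_top, affineSpan_convexHull]
    rw [AffineSubspace.affineSpan_eq_top_iff_vectorSpan_eq_top_of_nonempty ℝ _ _
      (⟨mk2 a h, by simp [hS]⟩ : S.Nonempty)]
    have hv1 : mk2 t 0 ∈ vectorSpan ℝ S := by
      have := vsub_mem_vectorSpan ℝ (show mk2 (a+t) h ∈ S by simp [hS])
        (show mk2 a h ∈ S by simp [hS])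
      rwa [show mk2 (a+t) h -ᵥ mk2 a h = mk2 t 0 by rw [vsub_eq_sub, mk2_sub]; congr 1 <;> ring]
        at this
    have hv2 : mk2 (b - a) (h' - h) ∈ vectorSpan ℝ S := by
      have := vsub_mem_vectorSpan ℝ (show mk2 b h' ∈ S by simp [hS])
        (show mk2 a h ∈ S by simp [hS])
      rwa [show mk2 b h' -ᵥ mk2 a h = mk2 (b-a) (h'-h) by rw [vsub_eq_sub, mk2_sub]] at this
    have hsub : Submodule.span ℝ ({mk2 t 0, mk2 (b-a) (h'-h)} :
        Set (EuclideanSpace ℝ (Fin 2))) ≤ vectorSpan ℝ S := by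
      rw [Submodule.span_le]
      rintro z (rfl | rfl)
      · exact hv1
      · exact hv2
    rw [eq_top_iff, ← span_pair_eq_top (ne_of_gt ht) (sub_ne_zero.2 (Ne.symm hhh))]
    exact hsub


section Pos

variable (hK : IsCompact K) (hconv : Convex ℝ K)
variable {p : EuclideanSpace ℝ (Fin 2)} {ε : ℝ} (hε : 0 < ε) (hball : Metric.ball p ε ⊆ K)

include hK hε hball

omit hK in
lemma slice_pts : p 0 - ε/2 ∈ slice K (p 1) ∧ p 0 + ε/2 ∈ slice K (p 1) := by
  constructor
  · refine hball ?_
    rw [Metric.mem_ball, show p = mk2 (p 0) (p 1) from mk2_eta p]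
    simp only [mk2_apply0, mk2_apply1]
    rw [dist_mk2_horiz, show p 0 - ε/2 - p 0 = -(ε/2) by ring, abs_neg,
      abs_of_pos (by linarith)]
    linarith
  · refine hball ?_
    rw [Metric.mem_ball, show p = mk2 (p 0) (p 1) from mk2_eta p]
    simp only [mk2_apply0, mk2_apply1]
    rw [dist_mk2_horiz, show p 0 + ε/2 - p 0 = ε/2 by ring, abs_of_pos (by linarith)]
    linarith

lemma lo_lt_p1 : lo K < p 1 := by
  have h1 : p 1 - ε/2 ∈ J K := by
    refine ⟨mk2 (p 0) (p 1 - ε/2), hball ?_, by simp⟩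
    rw [Metric.mem_ball, show p = mk2 (p 0) (p 1) from mk2_eta p]
    simp only [mk2_apply0, mk2_apply1]
    rw [dist_mk2_vert, show p 1 - ε/2 - p 1 = -(ε/2) by ring, abs_neg,
      abs_of_pos (by linarith)]
    linarith
  have := csInf_le (J_isCompact hK).isBounded.bddBelow h1
  rw [← lo] at this
  linarith

lemma p1_lt_hi : p 1 < hi K := by
  have h1 : p 1 + ε/2 ∈ J K := by
    refine ⟨mk2 (p 0) (p 1 + ε/2), hball ?_, by simp⟩
    rw [Metric.mem_ball, show p = mk2 (p 0) (p 1) from mk2_eta p]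
    simp only [mk2_apply0, mk2_apply1]
    rw [dist_mk2_vert, show p 1 + ε/2 - p 1 = ε/2 by ring, abs_of_pos (by linarith)]
    linarith
  have := le_csSup (J_isCompact hK).isBounded.bddAbove h1
  rw [← hi] at this
  linarith

include hconv

lemma wd_pos {h : ℝ} (h1 : lo K < h) (h2 : h < hi K) : 0 < wd K h := by
  obtain ⟨hsm, hsp⟩ := slice_pts hε hball
  have hJne : (J K).Nonempty := ⟨p 1, mk2 (p 0 + ε/2) (p 1), hsp, by simp⟩
  rcases le_or_gt (p 1) h with hp | hp
  · -- use the top point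
    have hhiJ : hi K ∈ J K := (J_isCompact hK).sSup_mem hJne
    obtain ⟨z, hz⟩ := (mem_J_iff K _).1 hhiJ
    have hp1hi : p 1 < hi K := lt_of_le_of_lt hp h2
    set t : ℝ := (hi K - h) / (hi K - p 1) with hdef
    have ht0 : 0 < t := div_pos (by linarith) (by linarith)
    have ht1 : t ≤ 1 := by
      rw [div_le_one (by linarith)]
      linarith
    have hne : hi K - p 1 ≠ 0 := by linarith
    have heq : t * p 1 + (1 - t) * hi K = h := by
      rw [hdef]
      field_simp
      ring
    have hcm := combo_mem_slice (a := t) (b := 1 - t) hconv hsm hz (le_of_lt ht0)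
      (by linarith) (by ring)
    have hcp := combo_mem_slice (a := t) (b := 1 - t) hconv hsp hz (le_of_lt ht0)
      (by linarith) (by ring)
    rw [heq] at hcm hcp
    have hhJ : h ∈ J K := (mem_J_iff K h).2 ⟨_, hcm⟩
    have hle1 := fl_le hK _ hcm
    have hle2 := le_gr hK _ hcp
    have : t * (p 0 - ε/2) + (1 - t) * z < t * (p 0 + ε/2) + (1 - t) * z := by
      nlinarith
    simp only [wd]
    nlinarith
  · -- use the bottom point
    have hloJ : lo K ∈ J K := (J_isCompact hK).sInf_mem hJne
    obtain ⟨z, hz⟩ := (mem_J_iff K _).1 hloJ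
    have hlop1 : lo K < p 1 := lt_trans h1 hp
    set t : ℝ := (h - lo K) / (p 1 - lo K) with hdef
    have ht0 : 0 < t := div_pos (by linarith) (by linarith)
    have ht1 : t ≤ 1 := by
      rw [div_le_one (by linarith)]
      linarith
    have hne : p 1 - lo K ≠ 0 := by linarith
    have heq : t * p 1 + (1 - t) * lo K = h := by
      rw [hdef]
      field_simp
      ring
    have hcm := combo_mem_slice (a := t) (b := 1 - t) hconv hsm hz (le_of_lt ht0)
      (by linarith) (by ring)
    have hcp := combo_mem_slice (a := t) (b := 1 - t) hconv hsp hz (le_of_lt ht0)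
      (by linarith) (by ring)
    rw [heq] at hcm hcp
    have hhJ : h ∈ J K := (mem_J_iff K h).2 ⟨_, hcm⟩
    have hle1 := fl_le hK _ hcm
    have hle2 := le_gr hK _ hcp
    simp only [wd]
    nlinarith

end Pos

end Stmt4Aux

end Stmt4Aux

open Stmt4Aux

/-- Every 2-dimensional compact convex body in the plane contains an inscribed
nondegenerate parallelogram with vertices on its boundary. -/
theorem stmt4 (K : Set (EuclideanSpace ℝ (Fin 2)))
    (hK : IsCompact K) (hconv : Convex ℝ K) (hint : (interior K).Nonempty) :
    ∃ x y x' y' : EuclideanSpace ℝ (Fin 2),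
      x ∈ frontier K ∧ y ∈ frontier K ∧ x' ∈ frontier K ∧ y' ∈ frontier K ∧
      x + x' = y + y' ∧
      (interior (convexHull ℝ {x, y, x', y'})).Nonempty := by
  obtain ⟨p, hp⟩ := hint
  rw [mem_interior_iff_mem_nhds, Metric.mem_nhds_iff] at hp
  obtain ⟨ε, hε, hball⟩ := hp
  have hpK : p ∈ K := hball (Metric.mem_ball_self hε)
  have hJne : (J K).Nonempty := ⟨p 1, p, hpK, rfl⟩
  have hloJ : lo K ∈ J K := (J_isCompact hK).sInf_mem hJne
  have hhiJ : hi K ∈ J K := (J_isCompact hK).sSup_mem hJne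
  have hlo1 : lo K < p 1 := lo_lt_p1 hK hε hball
  have hp1hi : p 1 < hi K := p1_lt_hi hK hε hball
  have hlohi : lo K < hi K := lt_trans hlo1 hp1hi
  have hJIcc := J_eq_Icc hK hconv hJne
  have hmemJ : ∀ h, lo K ≤ h → h ≤ hi K → h ∈ J K := fun h hl hr => by
    rw [hJIcc]; exact ⟨hl, hr⟩
  have hpos : ∀ h, lo K < h → h < hi K → 0 < wd K h := fun h hl hr =>
    wd_pos hK hconv hε hball hl hr
  by_cases hA : 0 < wd K (lo K)
  · by_cases hB : 0 < wd K (hi K)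
    · -- both boundary slices are nondegenerate segments
      have ht : 0 < min (wd K (lo K)) (wd K (hi K)) := lt_min hA hB
      refine build K ht (ne_of_lt hlohi) (bot_frontier hK (fl_mem hK hloJ)) ?_
        (top_frontier hK (fl_mem hK hhiJ)) ?_
      · apply bot_frontier hK
        apply Icc_subset_slice hK hconv hloJ
        refine ⟨by linarith, ?_⟩
        have h1 : min (wd K (lo K)) (wd K (hi K)) ≤ wd K (lo K) := min_le_left _ _
        rw [gr_eq_fl_add_wd]
        linarith
      · apply top_frontier hK
        apply Icc_subset_slice hK hconv hhiJ
        refine ⟨by linarith, ?_⟩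
        have h1 : min (wd K (lo K)) (wd K (hi K)) ≤ wd K (hi K) := min_le_right _ _
        rw [gr_eq_fl_add_wd]
        linarith
    · -- bottom slice nondegenerate, top degenerate
      have hBle : wd K (hi K) ≤ 0 := not_lt.1 hB
      obtain ⟨δ, hδ, husc⟩ := wd_usc (h₀ := hi K) (c := wd K (lo K)) hK (by linarith)
      set h := max (p 1) (hi K - δ/2) with hdef
      have hhlo : lo K < h := lt_of_lt_of_le hlo1 (le_max_left _ _)
      have hhhi : h < hi K := max_lt hp1hi (by linarith)
      have hhJ : h ∈ J K := hmemJ h (le_of_lt hhlo) (le_of_lt hhhi)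
      have hnear : |h - hi K| < δ := by
        have h1 : hi K - δ/2 ≤ h := le_max_right _ _
        rw [abs_of_nonpos (by linarith)]
        linarith
      have hwlt : wd K h < wd K (lo K) := husc h hhJ hnear
      have hwpos : 0 < wd K h := hpos h hhlo hhhi
      refine build K hwpos (ne_of_gt hhlo) (fl_frontier hK hhJ) ?_
        (bot_frontier hK (fl_mem hK hloJ)) ?_
      · rw [← gr_eq_fl_add_wd]
        exact gr_frontier hK hhJ
      · apply bot_frontier hK
        apply Icc_subset_slice hK hconv hloJ
        refine ⟨by linarith, ?_⟩
        rw [gr_eq_fl_add_wd]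
        linarith
  · by_cases hB : 0 < wd K (hi K)
    · -- top slice nondegenerate, bottom degenerate
      have hAle : wd K (lo K) ≤ 0 := not_lt.1 hA
      obtain ⟨δ, hδ, husc⟩ := wd_usc (h₀ := lo K) (c := wd K (hi K)) hK (by linarith)
      set h := min (p 1) (lo K + δ/2) with hdef
      have hhlo : lo K < h := lt_min hlo1 (by linarith)
      have hhhi : h < hi K := lt_of_le_of_lt (min_le_left _ _) hp1hi
      have hhJ : h ∈ J K := hmemJ h (le_of_lt hhlo) (le_of_lt hhhi)
      have hnear : |h - lo K| < δ := by
        have h1 : h ≤ lo K + δ/2 := min_le_right _ _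
        rw [abs_of_nonneg (by linarith)]
        linarith
      have hwlt : wd K h < wd K (hi K) := husc h hhJ hnear
      have hwpos : 0 < wd K h := hpos h hhlo hhhi
      refine build K hwpos (ne_of_lt hhhi) (fl_frontier hK hhJ) ?_
        (top_frontier hK (fl_mem hK hhiJ)) ?_
      · rw [← gr_eq_fl_add_wd]
        exact gr_frontier hK hhJ
      · apply top_frontier hK
        apply Icc_subset_slice hK hconv hhiJ
        refine ⟨by linarith, ?_⟩
        rw [gr_eq_fl_add_wd]
        linarith
    · -- both boundary slices degenerate: intermediate value argument
      have hAle : wd K (lo K) ≤ 0 := not_lt.1 hA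
      have hBle : wd K (hi K) ≤ 0 := not_lt.1 hB
      have hApos : 0 < wd K (p 1) := hpos (p 1) hlo1 hp1hi
      set c := wd K (p 1) / 2 with hcdef
      obtain ⟨δ₁, hδ₁, husc₁⟩ := wd_usc (h₀ := lo K) (c := c) hK (by linarith)
      obtain ⟨δ₂, hδ₂, husc₂⟩ := wd_usc (h₀ := hi K) (c := c) hK (by linarith)
      set hl := min (p 1) (lo K + δ₁/2) with hldef
      set hr := max (p 1) (hi K - δ₂/2) with hrdef
      have hllo : lo K < hl := lt_min hlo1 (by linarith)
      have hlp1 : hl ≤ p 1 := min_le_left _ _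
      have hlJ : hl ∈ J K := hmemJ _ (le_of_lt hllo) (le_trans hlp1 (le_of_lt hp1hi))
      have hwl : wd K hl < c := by
        apply husc₁ hl hlJ
        have h1 : hl ≤ lo K + δ₁/2 := min_le_right _ _
        rw [abs_of_nonneg (by linarith)]
        linarith
      have hrhi : hr < hi K := max_lt hp1hi (by linarith)
      have hp1r : p 1 ≤ hr := le_max_left _ _
      have hrJ : hr ∈ J K := hmemJ _ (le_trans (le_of_lt hlo1) hp1r) (le_of_lt hrhi)
      have hwr : wd K hr < c := by
        apply husc₂ hr hrJ
        have h1 : hi K - δ₂/2 ≤ hr := le_max_right _ _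
        rw [abs_of_nonpos (by linarith)]
        linarith
      have hcont := wd_continuousOn hK hconv hJne
      have hsub1 : Set.Icc hl (p 1) ⊆ Set.Ioo (lo K) (hi K) := fun x hx =>
        ⟨lt_of_lt_of_le hllo hx.1, lt_of_le_of_lt hx.2 hp1hi⟩
      have hsub2 : Set.Icc (p 1) hr ⊆ Set.Ioo (lo K) (hi K) := fun x hx =>
        ⟨lt_of_lt_of_le hlo1 hx.1, lt_of_le_of_lt hx.2 hrhi⟩
      have hivt1 := intermediate_value_Icc hlp1 (hcont.mono hsub1)
        (⟨le_of_lt hwl, by linarith⟩ : c ∈ Set.Icc (wd K hl) (wd K (p 1)))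
      obtain ⟨h, hhmem, hwh⟩ := hivt1
      have hivt2 := intermediate_value_Icc' hp1r (hcont.mono hsub2)
        (⟨le_of_lt hwr, by linarith⟩ : c ∈ Set.Icc (wd K hr) (wd K (p 1)))
      obtain ⟨h', h'mem, hwh'⟩ := hivt2
      have hne1 : h ≠ p 1 := by
        intro he
        rw [he] at hwh
        rw [hcdef] at hwh
        linarith
      have hlth : h < h' := lt_of_lt_of_le (lt_of_le_of_ne hhmem.2 hne1) h'mem.1
      have hhJ : h ∈ J K := hmemJ _ (le_trans (le_of_lt hllo) hhmem.1)
        (le_trans hhmem.2 (le_of_lt hp1hi))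
      have hh'J : h' ∈ J K := hmemJ _ (le_trans (le_of_lt hlo1) h'mem.1)
        (le_trans h'mem.2 (le_of_lt hrhi))
      have hcpos : 0 < c := by linarith
      refine build K hcpos (ne_of_lt hlth) (fl_frontier hK hhJ) ?_
        (fl_frontier hK hh'J) ?_
      · rw [← hwh, ← gr_eq_fl_add_wd]
        exact gr_frontier hK hhJ
      · rw [← hwh', ← gr_eq_fl_add_wd]
        exact gr_frontier hK hh'J
end

section
/- Let K be an n-dimensional compact convex body with centroid p, and let [x, y] be a chord of K through p, so p = (1 − μ)x + μy with x, y ∈ ∂K and μ ∈ [0,1]. Then 1/(n+1) ≤ μ ≤ n/(n+1). -/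
open MeasureTheory Set

/-- If a continuous linear functional is `< c` on the interior of a convex set with nonempty
interior, then it is `≤ c` on the whole set. -/
lemma aux_le_on_K {n : ℕ} {K : Set (EuclideanSpace ℝ (Fin n))}
    (hconv : Convex ℝ K) {w : EuclideanSpace ℝ (Fin n)} (hw : w ∈ interior K)
    (f : EuclideanSpace ℝ (Fin n) →L[ℝ] ℝ) {c : ℝ}
    (hf : ∀ a ∈ interior K, f a < c) {z : EuclideanSpace ℝ (Fin n)} (hz : z ∈ K) :
    f z ≤ c := by
  have key : ∀ t ∈ Ioo (0:ℝ) 1, (1 - t) * f z + t * f w < c := by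
    intro t ht
    have hmem : (1 - t) • z + t • w ∈ interior K :=
      hconv.combo_self_interior_mem_interior hz hw (by linarith [ht.2]) ht.1 (by ring)
    have := hf _ hmem
    simpa [map_add, _root_.map_smul, smul_eq_mul] using this
  have hT : Filter.Tendsto (fun t : ℝ => (1 - t) * f z + t * f w) (nhdsWithin 0 (Ioi (0:ℝ)))
      (nhds (f z)) := by
    have hcont : Continuous fun t : ℝ => (1 - t) * f z + t * f w := by continuity
    have h0 : Filter.Tendsto (fun t : ℝ => (1 - t) * f z + t * f w)
        (nhdsWithin 0 (Ioi (0:ℝ))) (nhds ((1 - 0) * f z + 0 * f w)) :=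
      (hcont.tendsto 0).mono_left nhdsWithin_le_nhds
    simpa using h0
  refine le_of_tendsto hT ?_
  filter_upwards [Ioo_mem_nhdsGT one_pos] with t ht using (key t ht).le

/-- Core inequality: for a compact convex body `K`, a point `x₀ ∈ K`, and a linear functional
`f ≤ M` on `K`, the integral of `f z - f x₀` over `K` is at most `n/(n+1) (M - f x₀) vol K`. -/
lemma aux_core {n : ℕ} {K : Set (EuclideanSpace ℝ (Fin n))}
    (hK : IsCompact K) (hconv : Convex ℝ K)
    {x₀ : EuclideanSpace ℝ (Fin n)} (hx₀ : x₀ ∈ K)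
    (f : EuclideanSpace ℝ (Fin n) →L[ℝ] ℝ) (M : ℝ) (hM : ∀ z ∈ K, f z ≤ M) :
    (n + 1 : ℝ) * ∫ z in K, (f z - f x₀) ≤ (M - f x₀) * ((n : ℝ) * (volume K).toReal) := by
  set V : ℝ := (volume K).toReal with hV
  set I : ℝ := ∫ z in K, (f z - f x₀) with hIdef
  have hKm : MeasurableSet K := hK.measurableSet
  have hVfin : volume K ≠ ⊤ := hK.measure_lt_top.ne
  have hgc : Continuous fun z : EuclideanSpace ℝ (Fin n) => f z - f x₀ :=
    f.continuous.sub continuous_const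
  have hgint : IntegrableOn (fun z => f z - f x₀) K volume :=
    hgc.continuousOn.integrableOn_compact hK
  have hd : Module.finrank ℝ (EuclideanSpace ℝ (Fin n)) = n := finrank_euclideanSpace_fin
  have key : ∀ l : ℝ, l ∈ Ioo (0:ℝ) 1 →
      (∑ i ∈ Finset.range (n+1), l ^ i) * I
        ≤ (M - f x₀) * ((∑ i ∈ Finset.range n, l ^ i) * V) := by
    intro l hl
    have hln : (0:ℝ) < l ^ n := pow_pos hl.1 n
    set c : EuclideanSpace ℝ (Fin n) := (1 - l) • x₀ with hc
    set Φ : EuclideanSpace ℝ (Fin n) → EuclideanSpace ℝ (Fin n) := fun z => c + l • z with hΦ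
    have hΦcont : Continuous Φ := continuous_const.add (continuous_id.const_smul l)
    have hΦinj : Function.Injective Φ := by
      intro a b hab
      have h1 : l • a = l • b := add_left_cancel hab
      exact smul_right_injective _ hl.1.ne' h1
    set K' : Set (EuclideanSpace ℝ (Fin n)) := Φ '' K with hK'def
    have hK'sub : K' ⊆ K := by
      rintro _ ⟨z, hz, rfl⟩
      have h0 : (1 - l) • x₀ + l • z ∈ K :=
        hconv hx₀ hz (by linarith [hl.2]) hl.1.le (by ring)
      exact h0
    have hK'c : IsCompact K' := hK.image hΦcont
    have hK'm : MeasurableSet K' := hK'c.measurableSet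
    -- change of variables
    have hcov : ∀ h : EuclideanSpace ℝ (Fin n) → ℝ,
        ∫ z, h z = l ^ n * ∫ z, h (Φ z) := by
      intro h
      have h1 : ∫ z, h (c + l • z)
          = |(l ^ Module.finrank ℝ (EuclideanSpace ℝ (Fin n)))⁻¹| • ∫ z, h (c + z) :=
        Measure.integral_comp_smul volume (fun v => h (c + v)) l
      have h2 : (∫ v, h (c + v)) = ∫ v, h v := by
        simp_rw [add_comm c]
        exact integral_add_right_eq_self h c
      have h3 : ∫ z, h (Φ z) = (l ^ n)⁻¹ * ∫ v, h v := by
        calc ∫ z, h (Φ z)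
            = |(l ^ Module.finrank ℝ (EuclideanSpace ℝ (Fin n)))⁻¹| • ∫ z, h (c + z) :=
              Measure.integral_comp_smul volume (fun v => h (c + v)) l
          _ = (l ^ n)⁻¹ * ∫ v, h v := by
              rw [h2, hd, abs_of_pos (inv_pos.mpr hln), smul_eq_mul]
      rw [h3, mul_inv_cancel_left₀ hln.ne']
    -- membership transfer
    have hmemb : ∀ z, (Φ z ∈ K') ↔ z ∈ K := by
      intro z
      constructor
      · rintro ⟨w, hw, hww⟩
        exact (hΦinj hww) ▸ hw
      · exact fun hz => mem_image_of_mem Φ hz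
    have hgΦ : ∀ z, f (Φ z) - f x₀ = l * (f z - f x₀) := by
      intro z
      simp only [hΦ, hc, map_add, _root_.map_smul, smul_eq_mul]
      ring
    -- integral over K'
    have hIK' : ∫ z in K', (f z - f x₀) = l ^ (n+1) * I := by
      have e1 : ∫ z in K', (f z - f x₀) = ∫ z, K'.indicator (fun z => f z - f x₀) z :=
        (integral_indicator hK'm).symm
      have e3 : ∀ z, K'.indicator (fun z => f z - f x₀) (Φ z)
          = K.indicator (fun z => l * (f z - f x₀)) z := by
        intro z
        by_cases hz : z ∈ K
        · rw [indicator_of_mem ((hmemb z).mpr hz), indicator_of_mem hz, hgΦ]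
        · rw [indicator_of_notMem (fun h => hz ((hmemb z).mp h)), indicator_of_notMem hz]
      rw [e1, hcov (K'.indicator (fun z => f z - f x₀))]
      simp_rw [e3]
      rw [integral_indicator hKm, integral_const_mul]
      rw [← hIdef]
      ring
    -- volume of K'
    have hVK' : (volume K').toReal = l ^ n * V := by
      have e1 : ∫ z in K', (1:ℝ) = (volume K').toReal := by
        rw [setIntegral_const, smul_eq_mul, mul_one, measureReal_def]
      have e3 : ∀ z, K'.indicator (fun _ => (1:ℝ)) (Φ z) = K.indicator (fun _ => (1:ℝ)) z := by
        intro z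
        by_cases hz : z ∈ K
        · rw [indicator_of_mem ((hmemb z).mpr hz), indicator_of_mem hz]
        · rw [indicator_of_notMem (fun h => hz ((hmemb z).mp h)), indicator_of_notMem hz]
      have e2 : ∫ z in K', (1:ℝ) = l ^ n * ∫ z in K, (1:ℝ) := by
        rw [← integral_indicator hK'm, hcov (K'.indicator (fun _ => (1:ℝ)))]
        simp_rw [e3]
        rw [integral_indicator hKm]
      rw [← e1, e2, setIntegral_const, smul_eq_mul, mul_one]; rfl
    -- the difference set
    have hK'vfin : volume K' ≠ ⊤ := ((measure_mono hK'sub).trans_lt hK.measure_lt_top).ne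
    have hdiffVol : (volume (K \ K')).toReal = V - l ^ n * V := by
      rw [measure_diff hK'sub hK'm.nullMeasurableSet hK'vfin,
        ENNReal.toReal_sub_of_le (measure_mono hK'sub) hVfin, hVK']
    have hdiffInt : ∫ z in K \ K', (f z - f x₀) = I - l ^ (n+1) * I := by
      rw [integral_diff hK'm hgint hK'sub, hIK', ← hIdef]
    have hbound : ∫ z in K \ K', (f z - f x₀) ≤ (M - f x₀) * (V - l ^ n * V) := by
      have hmono : ∫ z in K \ K', (f z - f x₀) ≤ ∫ _z in K \ K', (M - f x₀) := by
        refine setIntegral_mono_on (hgint.mono_set diff_subset) ?_ (hKm.diff hK'm) ?_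
        · exact integrableOn_const ((measure_mono diff_subset).trans_lt
            hK.measure_lt_top).ne
        · intro z hz
          have := hM z hz.1
          linarith
      rw [setIntegral_const, smul_eq_mul, measureReal_def, hdiffVol] at hmono
      calc ∫ z in K \ K', (f z - f x₀) ≤ (V - l ^ n * V) * (M - f x₀) := hmono
        _ = (M - f x₀) * (V - l ^ n * V) := by ring
    have H : (1 - l ^ (n+1)) * I ≤ (M - f x₀) * (V - l ^ n * V) := by
      calc (1 - l ^ (n+1)) * I = I - l ^ (n+1) * I := by ring
        _ = ∫ z in K \ K', (f z - f x₀) := hdiffInt.symm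
        _ ≤ (M - f x₀) * (V - l ^ n * V) := hbound
    have hfac : ∀ k : ℕ, 1 - l ^ k = (1 - l) * ∑ i ∈ Finset.range k, l ^ i := by
      intro k
      have hg := geom_sum_mul l k
      nlinarith [hg]
    have h1l : (0:ℝ) < 1 - l := by linarith [hl.2]
    have H2 : (1 - l) * ((∑ i ∈ Finset.range (n+1), l ^ i) * I)
        ≤ (1 - l) * ((M - f x₀) * ((∑ i ∈ Finset.range n, l ^ i) * V)) := by
      have e1 : (1 - l) * ((∑ i ∈ Finset.range (n+1), l ^ i) * I) = (1 - l ^ (n+1)) * I := by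
        rw [hfac (n+1)]; ring
      have e2 : (1 - l) * ((M - f x₀) * ((∑ i ∈ Finset.range n, l ^ i) * V))
          = (M - f x₀) * (V - l ^ n * V) := by
        linear_combination (-((M - f x₀) * V)) * hfac n
      rw [e1, e2]; exact H
    exact le_of_mul_le_mul_left H2 h1l
  -- pass to the limit l → 1⁻
  have hmem : Ioo (0:ℝ) 1 ∈ nhdsWithin (1:ℝ) (Iio 1) :=
    Ioo_mem_nhdsLT_of_mem (by constructor <;> norm_num)
  have hT1 : Filter.Tendsto (fun l : ℝ => (∑ i ∈ Finset.range (n+1), l ^ i) * I)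
      (nhdsWithin 1 (Iio 1)) (nhds ((n + 1 : ℝ) * I)) := by
    have hcont : Continuous fun l : ℝ => (∑ i ∈ Finset.range (n+1), l ^ i) * I := by
      exact (continuous_finset_sum _ (fun i _ => continuous_pow i)).mul continuous_const
    have h0 : Filter.Tendsto (fun l : ℝ => (∑ i ∈ Finset.range (n+1), l ^ i) * I)
        (nhdsWithin 1 (Iio 1)) (nhds ((∑ i ∈ Finset.range (n+1), (1:ℝ) ^ i) * I)) :=
      (hcont.tendsto 1).mono_left nhdsWithin_le_nhds
    simpa using h0
  have hT2 : Filter.Tendsto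
      (fun l : ℝ => (M - f x₀) * ((∑ i ∈ Finset.range n, l ^ i) * V))
      (nhdsWithin 1 (Iio 1)) (nhds ((M - f x₀) * ((n : ℝ) * V))) := by
    have hcont : Continuous fun l : ℝ =>
        (M - f x₀) * ((∑ i ∈ Finset.range n, l ^ i) * V) :=
      continuous_const.mul ((continuous_finset_sum _ (fun i _ => continuous_pow i)).mul
        continuous_const)
    have h0 : Filter.Tendsto
        (fun l : ℝ => (M - f x₀) * ((∑ i ∈ Finset.range n, l ^ i) * V))
        (nhdsWithin 1 (Iio 1))
        (nhds ((M - f x₀) * ((∑ i ∈ Finset.range n, (1:ℝ) ^ i) * V))) :=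
      (hcont.tendsto 1).mono_left nhdsWithin_le_nhds
    simpa using h0
  exact le_of_tendsto_of_tendsto hT1 hT2 (Filter.eventually_of_mem hmem fun l hl => key l hl)

/-- One half of Hammer's theorem. -/
lemma aux_half {n : ℕ} {K : Set (EuclideanSpace ℝ (Fin n))}
    (hK : IsCompact K) (hconv : Convex ℝ K) (hint : (interior K).Nonempty)
    {p u v : EuclideanSpace ℝ (Fin n)}
    (hintf : ∀ f : EuclideanSpace ℝ (Fin n) →L[ℝ] ℝ,
      ∫ z in K, f z = (volume K).toReal * f p)
    (hpmem : p ∈ interior K) (hVpos : 0 < (volume K).toReal)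
    (hu : u ∈ K) (hvf : v ∉ interior K)
    {ν : ℝ} (hchord : p = (1 - ν) • u + ν • v) :
    ν * (n + 1 : ℝ) ≤ n := by
  obtain ⟨w, hwmem⟩ := hint
  obtain ⟨f, hf⟩ := geometric_hahn_banach_open_point (hconv.interior) isOpen_interior hvf
  have hle : ∀ z ∈ K, f z ≤ f v := fun z hz => aux_le_on_K hconv hwmem f hf hz
  have hfp : f p = (1 - ν) * f u + ν * f v := by
    rw [hchord]; simp [map_add, _root_.map_smul, smul_eq_mul]
  have hc : 0 < f v - f u := by
    rcases eq_or_lt_of_le (hle u hu) with h | h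
    · exfalso
      have hfpv : f p = f v := by rw [hfp, ← h]; ring
      have := hf p hpmem
      rw [hfpv] at this
      exact lt_irrefl _ this
    · linarith
  have hcore := aux_core hK hconv hu f (f v) hle
  have hsplit : ∫ z in K, (f z - f u) = (volume K).toReal * (f p - f u) := by
    rw [integral_sub (f.continuous.continuousOn.integrableOn_compact hK)
      (integrableOn_const hK.measure_lt_top.ne), hintf f, setIntegral_const,
      smul_eq_mul, measureReal_def]
    ring
  have hfpu : f p - f u = ν * (f v - f u) := by rw [hfp]; ring
  rw [hsplit, hfpu] at hcore
  nlinarith [mul_pos hc hVpos, hcore]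

/-- Hammer's theorem: the centroid of an `n`-dimensional convex body divides every chord
through it in ratio between `1/(n+1)` and `n/(n+1)`. -/
theorem stmt5 {n : ℕ} (K : Set (EuclideanSpace ℝ (Fin n)))
    (hK : IsCompact K) (hconv : Convex ℝ K) (hint : (interior K).Nonempty)
    (p : EuclideanSpace ℝ (Fin n))
    (hp : p = (volume K).toReal⁻¹ • ∫ x in K, x)
    (x y : EuclideanSpace ℝ (Fin n)) (hx : x ∈ frontier K) (hy : y ∈ frontier K)
    (μ : ℝ) (hμ : μ ∈ Set.Icc (0 : ℝ) 1)
    (hchord : p = (1 - μ) • x + μ • y) :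
    1 / (n + 1 : ℝ) ≤ μ ∧ μ ≤ n / (n + 1 : ℝ) := by
  have hcl : IsClosed K := hK.isClosed
  have hKm : MeasurableSet K := hK.measurableSet
  have hVfin : volume K ≠ ⊤ := hK.measure_lt_top.ne
  have hVpos : 0 < (volume K).toReal := by
    refine ENNReal.toReal_pos (ne_of_gt ?_) hVfin
    calc (0:ENNReal) < volume (interior K) := isOpen_interior.measure_pos volume hint
      _ ≤ volume K := measure_mono interior_subset
  have hIK : IntegrableOn (fun z : EuclideanSpace ℝ (Fin n) => z) K volume :=
    continuousOn_id.integrableOn_compact hK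
  have hintf : ∀ f : EuclideanSpace ℝ (Fin n) →L[ℝ] ℝ,
      ∫ z in K, f z = (volume K).toReal * f p := by
    intro f
    rw [hp, _root_.map_smul, smul_eq_mul, ← f.integral_comp_comm hIK,
      mul_inv_cancel_left₀ hVpos.ne']
  have hxK : x ∈ K := hcl.frontier_subset hx
  have hyK : y ∈ K := hcl.frontier_subset hy
  have hpmem : p ∈ interior K := by
    by_contra hpK
    obtain ⟨f, hf⟩ := geometric_hahn_banach_open_point (hconv.interior) isOpen_interior hpK
    obtain ⟨w, hw⟩ := id hint
    have hle : ∀ z ∈ K, f z ≤ f p := fun z hz => aux_le_on_K hconv hw f hf hz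
    have hgi : IntegrableOn (fun z => f p - f z) K volume :=
      ((continuous_const.sub f.continuous).continuousOn).integrableOn_compact hK
    have hzero : ∫ z in K, (f p - f z) = 0 := by
      rw [integral_sub (integrableOn_const (C := f p) hK.measure_lt_top.ne)
        (f.continuous.continuousOn.integrableOn_compact hK), hintf f, setIntegral_const,
        smul_eq_mul, measureReal_def]
      ring
    have hpos : 0 < ∫ z in K, (f p - f z) := by
      rw [setIntegral_pos_iff_support_of_nonneg_ae ?_ hgi]
      · refine lt_of_lt_of_le (isOpen_interior.measure_pos volume hint) (measure_mono ?_)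
        intro a ha
        exact ⟨sub_ne_zero.2 (hf a ha).ne', interior_subset ha⟩
      · filter_upwards [ae_restrict_mem hKm] with z hz using sub_nonneg.2 (hle z hz)
    rw [hzero] at hpos
    exact lt_irrefl _ hpos
  have hn1 : (0:ℝ) < (n:ℝ) + 1 := by positivity
  constructor
  · have hchord' : p = (1 - (1 - μ)) • y + (1 - μ) • x := by
      rw [hchord, show (1 - (1 - μ)) = μ by ring]
      abel
    have h1 := aux_half hK hconv hint hintf hpmem hVpos hyK hx.2 hchord'
    rw [div_le_iff₀ hn1]
    linarith
  · have h2 := aux_half hK hconv hint hintf hpmem hVpos hxK hy.2 hchord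
    rw [le_div_iff₀ hn1]
    linarith
end
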